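/- arXiv:0711.4160 — 7 statements merged into one kernel-verified Lean document; each statement's English description precedes it below -/
import Mathlib

section
/- The constant term in x_1,...,x_n of the Dyson product ∏_{1≤i≠j≤n} (1 - x_i/x_j)^{a_i} equals the multinomial coefficient (a_1+...+a_n)!/(a_1!·a_2!···a_n!). -/
open Finset

noncomputable def Xm {n : ℕ} (v : Fin n → ℤ) : AddMonoidAlgebra ℚ (Fin n → ℤ) :=
  AddMonoidAlgebra.single v 1

noncomputable def dyson {n : ℕ} (a : Fin n → ℕ) : AddMonoidAlgebra ℚ (Fin n → ℤ) :=
  ∏ i : Fin n, ∏ j ∈ Finset.univ.filter (fun j => j ≠ i),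
    (1 - Xm (Pi.single i 1 - Pi.single j 1)) ^ a i

/-- constant term (coefficient of x₁⁰⋯xₙ⁰) of a Laurent polynomial -/
noncomputable def ct {n : ℕ} (f : AddMonoidAlgebra ℚ (Fin n → ℤ)) : ℚ := f.coeff 0

namespace DysonAux
variable {n : ℕ}

instance : IsDomain (AddMonoidAlgebra ℚ (Fin n → ℤ)) := NoZeroDivisors.to_isDomain _

lemma Xm_mul (u v : Fin n → ℤ) : Xm u * Xm v = Xm (u + v) := by
  simp [Xm, AddMonoidAlgebra.single_mul_single]

lemma Xm_zero : Xm (0 : Fin n → ℤ) = 1 := rfl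

lemma Xm_ne_zero (v : Fin n → ℤ) : Xm v ≠ 0 := by
  simp [Xm, AddMonoidAlgebra.single_eq_zero]

lemma supp_Xm (v : Fin n → ℤ) : (Xm v).coeff.support ⊆ {v} := Finsupp.support_single_subset

lemma supp_one : (1 : AddMonoidAlgebra ℚ (Fin n → ℤ)).coeff.support ⊆ {0} := Finsupp.support_single_subset

lemma one_apply_zero : (1 : AddMonoidAlgebra ℚ (Fin n → ℤ)).coeff 0 = 1 := Finsupp.single_eq_same

lemma Xm_apply_zero {v : Fin n → ℤ} (h : v ≠ 0) : (Xm v).coeff 0 = 0 := Finsupp.single_eq_of_ne' h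

lemma sub_apply (f g : AddMonoidAlgebra ℚ (Fin n → ℤ)) (v : Fin n → ℤ) :
    (f - g).coeff v = f.coeff v - g.coeff v := Finsupp.sub_apply f.coeff g.coeff v

section Supp
variable {A : Set (Fin n → ℤ)}

lemma suppA_one (h0 : (0 : Fin n → ℤ) ∈ A) :
    ∀ v ∈ (1 : AddMonoidAlgebra ℚ (Fin n → ℤ)).coeff.support, v ∈ A := by
  intro v hv; have := supp_one hv; simp at this; subst this; exact h0

lemma suppA_mul (hadd : ∀ u ∈ A, ∀ v ∈ A, u + v ∈ A)
    {f g : AddMonoidAlgebra ℚ (Fin n → ℤ)}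
    (hf : ∀ v ∈ f.coeff.support, v ∈ A) (hg : ∀ v ∈ g.coeff.support, v ∈ A) :
    ∀ v ∈ (f * g).coeff.support, v ∈ A := by
  classical
  intro v hv
  have := AddMonoidAlgebra.support_coeff_mul_subset f g hv
  rw [Finset.mem_add] at this
  obtain ⟨u, hu, w, hw, rfl⟩ := this
  exact hadd u (hf u hu) w (hg w hw)

lemma suppA_sub {f g : AddMonoidAlgebra ℚ (Fin n → ℤ)}
    (hf : ∀ v ∈ f.coeff.support, v ∈ A) (hg : ∀ v ∈ g.coeff.support, v ∈ A) :
    ∀ v ∈ (f - g).coeff.support, v ∈ A := by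
  classical
  intro v hv
  have := Finsupp.support_sub (f := f.coeff) (g := g.coeff) hv
  rw [Finset.mem_union] at this
  rcases this with h | h
  · exact hf v h
  · exact hg v h

lemma suppA_pow (h0 : (0 : Fin n → ℤ) ∈ A) (hadd : ∀ u ∈ A, ∀ v ∈ A, u + v ∈ A)
    {f : AddMonoidAlgebra ℚ (Fin n → ℤ)}
    (hf : ∀ v ∈ f.coeff.support, v ∈ A) (m : ℕ) :
    ∀ v ∈ (f ^ m).coeff.support, v ∈ A := by
  induction m with
  | zero => simpa using suppA_one h0
  | succ m ih => rw [pow_succ]; exact suppA_mul hadd ih hf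

lemma suppA_prod (h0 : (0 : Fin n → ℤ) ∈ A) (hadd : ∀ u ∈ A, ∀ v ∈ A, u + v ∈ A)
    {ι : Type*} {s : Finset ι} {F : ι → AddMonoidAlgebra ℚ (Fin n → ℤ)}
    (hF : ∀ i ∈ s, ∀ v ∈ (F i).coeff.support, v ∈ A) :
    ∀ v ∈ (∏ i ∈ s, F i).coeff.support, v ∈ A := by
  classical
  induction s using Finset.induction_on with
  | empty => simpa using suppA_one h0
  | @insert x s' hx ih =>
      rw [Finset.prod_insert hx]
      exact suppA_mul hadd (hF x (by simp)) (fun v hv => ih (fun i hi => hF i (by simp [hi])) v hv)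

end Supp

lemma mul_apply_zero (f g : AddMonoidAlgebra ℚ (Fin n → ℤ))
    (h : ∀ u ∈ f.coeff.support, ∀ v ∈ g.coeff.support, u + v = 0 → u = 0 ∧ v = 0) :
    (f * g).coeff 0 = f.coeff 0 * g.coeff 0 := by
  classical
  rw [AddMonoidAlgebra.coeff_mul]
  simp only [Finsupp.sum]
  calc (∑ u ∈ f.coeff.support, ∑ v ∈ g.coeff.support, if u + v = 0 then f.coeff u * g.coeff v else 0)
      = ∑ u ∈ f.coeff.support, ∑ v ∈ g.coeff.support, if u = 0 then (if v = 0 then f.coeff u * g.coeff v else 0) else 0 := by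
        refine Finset.sum_congr rfl fun u hu => Finset.sum_congr rfl fun v hv => ?_
        rw [← ite_and]
        refine if_congr ⟨fun hh => h u hu v hv hh, fun ⟨h1, h2⟩ => by simp [h1, h2]⟩ rfl rfl
    _ = ∑ u ∈ f.coeff.support, if u = 0 then (∑ v ∈ g.coeff.support, if v = 0 then f.coeff u * g.coeff v else 0) else 0 := by
        refine Finset.sum_congr rfl fun u hu => ?_
        split_ifs with hu0
        · rfl
        · simp
    _ = f.coeff 0 * g.coeff 0 := by
        rw [Finset.sum_ite_eq' f.coeff.support 0 (fun u => ∑ v ∈ g.coeff.support, if v = 0 then f.coeff u * g.coeff v else 0)]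
        rw [Finset.sum_ite_eq' g.coeff.support 0 (fun v => f.coeff 0 * g.coeff v)]
        split_ifs with h1 h2
        · rfl
        · rw [Finsupp.notMem_support_iff.mp h2]; ring
        · rw [Finsupp.notMem_support_iff.mp h1]; ring

/-! ### the exponent vectors -/

def ev (i : Fin n) : Fin n → ℤ := Pi.single i 1

lemma ev_apply_self (i : Fin n) : ev i i = 1 := by simp [ev]

lemma ev_apply_ne {i k : Fin n} (h : k ≠ i) : ev i k = 0 := by simp [ev, Pi.single_apply, h]

lemma ev_injective : Function.Injective (ev (n := n)) := by
  intro i j h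
  by_contra hne
  have h1 := congrFun h i
  rw [ev_apply_self] at h1
  rw [ev_apply_ne hne] at h1
  exact one_ne_zero h1

/-! ### generalized Dyson product -/

noncomputable def dysonS (s : Finset (Fin n)) (a : Fin n → ℕ) : AddMonoidAlgebra ℚ (Fin n → ℤ) :=
  ∏ i ∈ s, ∏ j ∈ s.erase i, (1 - Xm (ev i - ev j)) ^ a i

lemma dyson_eq (a : Fin n → ℕ) : dyson a = dysonS Finset.univ a := by
  unfold dyson dysonS
  refine Finset.prod_congr rfl fun i _ => ?_
  rw [Finset.filter_ne']
  rfl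


/-! ### the a k = 0 case -/

def Tset (k : Fin n) : Set (Fin n → ℤ) := {v | v k ≤ 0 ∧ (v k = 0 → v = 0)}

def Zset (k : Fin n) : Set (Fin n → ℤ) := {v | v k = 0}

lemma Tset_zero (k : Fin n) : (0 : Fin n → ℤ) ∈ Tset k := by simp [Tset]

lemma Tset_add (k : Fin n) : ∀ u ∈ Tset k, ∀ v ∈ Tset k, u + v ∈ Tset k := by
  rintro u ⟨hu1, hu2⟩ v ⟨hv1, hv2⟩
  constructor
  · simpa using add_nonpos hu1 hv1
  · intro h
    simp only [Pi.add_apply] at h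
    have hu0 : u k = 0 := by omega
    have hv0 : v k = 0 := by omega
    rw [hu2 hu0, hv2 hv0, add_zero]

lemma Zset_zero (k : Fin n) : (0 : Fin n → ℤ) ∈ Zset k := by simp [Zset]

lemma Zset_add (k : Fin n) : ∀ u ∈ Zset k, ∀ v ∈ Zset k, u + v ∈ Zset k := by
  intro u hu v hv
  simp only [Zset, Set.mem_setOf_eq, Pi.add_apply] at *
  omega

/-- "good" elements: support in Tset k and constant coefficient 1 -/
def GP (k : Fin n) (f : AddMonoidAlgebra ℚ (Fin n → ℤ)) : Prop :=
  (∀ v ∈ f.coeff.support, v ∈ Tset k) ∧ f.coeff 0 = 1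

lemma GP_one (k : Fin n) : GP k 1 := ⟨suppA_one (Tset_zero k), one_apply_zero⟩

lemma GP_mul {k : Fin n} {f g : AddMonoidAlgebra ℚ (Fin n → ℤ)} (hf : GP k f) (hg : GP k g) :
    GP k (f * g) := by
  refine ⟨suppA_mul (Tset_add k) hf.1 hg.1, ?_⟩
  rw [mul_apply_zero f g ?_, hf.2, hg.2, mul_one]
  intro u hu v hv huv
  obtain ⟨hu1, hu2⟩ := hf.1 u hu
  obtain ⟨hv1, hv2⟩ := hg.1 v hv
  have : u k + v k = 0 := by
    have := congrFun huv k; simpa using this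
  exact ⟨hu2 (by omega), hv2 (by omega)⟩

lemma GP_pow {k : Fin n} {f : AddMonoidAlgebra ℚ (Fin n → ℤ)} (hf : GP k f) (m : ℕ) :
    GP k (f ^ m) := by
  induction m with
  | zero => simpa using GP_one k
  | succ m ih => rw [pow_succ]; exact GP_mul ih hf

lemma GP_prod {k : Fin n} {ι : Type*} {s : Finset ι} {F : ι → AddMonoidAlgebra ℚ (Fin n → ℤ)}
    (hF : ∀ i ∈ s, GP k (F i)) : GP k (∏ i ∈ s, F i) := by
  classical
  induction s using Finset.induction_on with
  | empty => simpa using GP_one k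
  | @insert x s' hx ih =>
      rw [Finset.prod_insert hx]
      exact GP_mul (hF x (by simp)) (ih fun i hi => hF i (by simp [hi]))

lemma GP_factor {k i : Fin n} (hik : i ≠ k) : GP k (1 - Xm (ev i - ev k)) := by
  have hd : (ev i - ev k) k = -1 := by
    simp [Pi.sub_apply, ev_apply_ne (Ne.symm hik), ev_apply_self]
  have hdne : (ev i - ev k) ≠ 0 := fun h => by rw [h] at hd; simp at hd
  constructor
  · intro v hv
    have := suppA_sub (A := ({0, ev i - ev k} : Set (Fin n → ℤ)))
      (fun v hv => by have := supp_one hv; simp at this; simp [this])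
      (fun v hv => by have := supp_Xm _ hv; simp at this; simp [this]) v hv
    rcases this with h | h
    · subst h; exact Tset_zero k
    · subst h; exact ⟨by omega, fun hh => absurd (hd ▸ hh) (by norm_num)⟩
  · rw [sub_apply, one_apply_zero, Xm_apply_zero hdne, sub_zero]

/-- constant term of product where f doesn't involve x_k and g is good -/
lemma ct_mul_GP {k : Fin n} {f g : AddMonoidAlgebra ℚ (Fin n → ℤ)}
    (hf : ∀ v ∈ f.coeff.support, v ∈ Zset k) (hg : GP k g) : (f * g).coeff 0 = f.coeff 0 := by
  rw [mul_apply_zero f g ?_, hg.2, mul_one]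
  intro u hu v hv huv
  have hu0 : u k = 0 := hf u hu
  obtain ⟨hv1, hv2⟩ := hg.1 v hv
  have hk : u k + v k = 0 := by have := congrFun huv k; simpa using this
  have hv0 : v = 0 := hv2 (by omega)
  subst hv0
  rw [add_zero] at huv
  exact ⟨huv, rfl⟩

lemma supp_dysonS_erase {s : Finset (Fin n)} {k : Fin n} (a : Fin n → ℕ) :
    ∀ v ∈ (dysonS (s.erase k) a).coeff.support, v ∈ Zset k := by
  classical
  refine suppA_prod (Zset_zero k) (Zset_add k) ?_
  intro i hi
  refine suppA_prod (Zset_zero k) (Zset_add k) ?_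
  intro j hj
  refine suppA_pow (Zset_zero k) (Zset_add k) ?_ _
  refine suppA_sub (suppA_one (Zset_zero k)) ?_
  intro v hv
  have := supp_Xm _ hv
  simp only [Finset.mem_singleton] at this
  subst this
  have hik : i ≠ k := Finset.ne_of_mem_erase hi
  have hjk : j ≠ k := Finset.ne_of_mem_erase (Finset.mem_of_mem_erase hj)
  show (ev i - ev j) k = 0
  simp [Pi.sub_apply, ev_apply_ne (Ne.symm hik), ev_apply_ne (Ne.symm hjk)]


lemma dysonS_factor_zero {s : Finset (Fin n)} {k : Fin n} {a : Fin n → ℕ}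
    (hk : k ∈ s) (hak : a k = 0) :
    dysonS s a = dysonS (s.erase k) a * ∏ i ∈ s.erase k, (1 - Xm (ev i - ev k)) ^ a i := by
  classical
  unfold dysonS
  rw [← Finset.mul_prod_erase s _ hk]
  rw [hak]
  simp only [pow_zero, Finset.prod_const_one, one_mul]
  rw [← Finset.prod_mul_distrib]
  refine Finset.prod_congr rfl fun i hi => ?_
  have hik : i ≠ k := Finset.ne_of_mem_erase hi
  have hks : k ∈ s.erase i := Finset.mem_erase.mpr ⟨Ne.symm hik, hk⟩
  rw [← Finset.mul_prod_erase (s.erase i) _ hks, Finset.erase_right_comm, mul_comm]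

lemma ct_dysonS_zero {s : Finset (Fin n)} {k : Fin n} {a : Fin n → ℕ}
    (hk : k ∈ s) (hak : a k = 0) :
    ct (dysonS s a) = ct (dysonS (s.erase k) a) := by
  rw [dysonS_factor_zero hk hak]
  refine ct_mul_GP (supp_dysonS_erase a) ?_
  refine GP_prod fun i hi => ?_
  exact GP_pow (GP_factor (Finset.ne_of_mem_erase hi)) _

lemma multinomial_erase {s : Finset (Fin n)} {k : Fin n} {a : Fin n → ℕ}
    (hk : k ∈ s) (hak : a k = 0) :
    Nat.multinomial s a = Nat.multinomial (s.erase k) a := by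
  classical
  conv_lhs => rw [← Finset.insert_erase hk]
  rw [Nat.multinomial_insert (Finset.notMem_erase k s)]
  simp [hak]


/-! ### the Lagrange identity -/

noncomputable def Pfac (s : Finset (Fin n)) (i : Fin n) : AddMonoidAlgebra ℚ (Fin n → ℤ) :=
  ∏ j ∈ s.erase i, (1 - Xm (ev i - ev j))

lemma Xm_injective : Function.Injective (Xm (n := n)) := by
  intro u v h
  have := AddMonoidAlgebra.single_left_injective (one_ne_zero (α := ℚ)) h
  exact this

lemma lagrangeId {s : Finset (Fin n)} (hs : s.Nonempty) :
    ∏ i ∈ s, Pfac s i = ∑ i ∈ s, ∏ l ∈ s.erase i, Pfac s l := by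
  classical
  set K := FractionRing (AddMonoidAlgebra ℚ (Fin n → ℤ))
  set φ := algebraMap (AddMonoidAlgebra ℚ (Fin n → ℤ)) K with hφ
  have hinj : Function.Injective φ := IsFractionRing.injective _ _
  apply hinj
  rw [map_prod, map_sum]
  simp only [map_prod]
  set t : Fin n → K := fun i => φ (Xm (ev i)) with ht
  have tinj : ∀ {i j : Fin n}, t i = t j → i = j := by
    intro i j h
    exact ev_injective (Xm_injective (hinj h))
  have ht0 : ∀ i, t i ≠ 0 := fun i h => Xm_ne_zero (ev i) (hinj (by simpa using h))
  have htsub : ∀ {i j : Fin n}, i ≠ j → t j - t i ≠ 0 := by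
    intro i j hij h
    exact hij (tinj (sub_eq_zero.mp h).symm)
  have hφfac : ∀ {i j : Fin n}, i ≠ j → φ (1 - Xm (ev i - ev j)) = (t j - t i) / t j := by
    intro i j hij
    have hR : Xm (ev j) * (1 - Xm (ev i - ev j)) = Xm (ev j) - Xm (ev i) := by
      rw [mul_sub, mul_one, Xm_mul]
      congr 2
      abel
    rw [eq_div_iff (ht0 j), mul_comm, map_sub, map_one]
    have := congrArg φ hR
    rw [map_mul, map_sub, map_sub, map_one] at this
    exact this
  set Q : Fin n → K := fun i => φ (Pfac s i) with hQdef
  have hQ : ∀ i ∈ s, Q i = ∏ j ∈ s.erase i, (t j - t i) / t j := by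
    intro i hi
    rw [hQdef]
    simp only [Pfac, map_prod]
    refine Finset.prod_congr rfl fun j hj => hφfac (Ne.symm (Finset.ne_of_mem_erase hj))
  -- Lagrange
  have htinj : Set.InjOn t ↑s := fun i _ j _ h => tinj h
  have hLag := Lagrange.sum_basis htinj hs
  have key : ∑ i ∈ s, ∏ j ∈ s.erase i, (t j / (t j - t i)) = 1 := by
    have := congrArg (Polynomial.eval (0 : K)) hLag
    rw [Polynomial.eval_finset_sum, Polynomial.eval_one] at this
    rw [← this]
    refine Finset.sum_congr rfl fun i hi => ?_
    rw [Lagrange.basis, Polynomial.eval_prod]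
    refine Finset.prod_congr rfl fun j hj => ?_
    have hij : i ≠ j := Ne.symm (Finset.ne_of_mem_erase hj)
    rw [Lagrange.basisDivisor]
    simp only [Polynomial.eval_mul, Polynomial.eval_C, Polynomial.eval_sub, Polynomial.eval_X,
      Polynomial.eval_C]
    have h1 : t i - t j ≠ 0 := by
      intro h; exact hij (tinj (sub_eq_zero.mp h))
    have h2 : t j - t i ≠ 0 := htsub hij
    rw [← neg_sub (t j) (t i), inv_neg]
    ring
  -- now the identity
  have hQinv : ∀ i ∈ s, Q i * ∏ j ∈ s.erase i, (t j / (t j - t i)) = 1 := by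
    intro i hi
    rw [hQ i hi, ← Finset.prod_mul_distrib]
    refine Finset.prod_eq_one fun j hj => ?_
    have hij : i ≠ j := Ne.symm (Finset.ne_of_mem_erase hj)
    rw [div_mul_div_comm, mul_comm (t j - t i) (t j)]
    exact div_self (mul_ne_zero (ht0 j) (htsub hij))
  calc ∏ i ∈ s, Q i
      = (∏ i ∈ s, Q i) * ∑ i ∈ s, ∏ j ∈ s.erase i, (t j / (t j - t i)) := by rw [key, mul_one]
    _ = ∑ i ∈ s, (∏ l ∈ s, Q l) * ∏ j ∈ s.erase i, (t j / (t j - t i)) := by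
        rw [Finset.mul_sum]
    _ = ∑ i ∈ s, ∏ l ∈ s.erase i, Q l := by
        refine Finset.sum_congr rfl fun i hi => ?_
        rw [← Finset.mul_prod_erase s Q hi]
        rw [mul_comm (Q i), mul_assoc, hQinv i hi, mul_one]


/-! ### multinomial recurrence -/

lemma multinomial_eq_q (s : Finset (Fin n)) (f : Fin n → ℕ) :
    (Nat.multinomial s f : ℚ)
      = (Nat.factorial (∑ i ∈ s, f i) : ℚ) / ∏ i ∈ s, (Nat.factorial (f i) : ℚ) := by
  have hne : (∏ i ∈ s, (Nat.factorial (f i) : ℚ)) ≠ 0 :=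
    Finset.prod_ne_zero_iff.mpr fun i _ => Nat.cast_ne_zero.mpr (Nat.factorial_ne_zero _)
  rw [eq_div_iff hne]
  have h := congrArg (Nat.cast : ℕ → ℚ) (Nat.multinomial_spec s f)
  push_cast at h
  rw [mul_comm]
  exact h

lemma multinomial_rec {s : Finset (Fin n)} {a : Fin n → ℕ} (hs : s.Nonempty)
    (ha : ∀ i ∈ s, 1 ≤ a i) :
    (Nat.multinomial s a : ℚ)
      = ∑ i ∈ s, (Nat.multinomial s (Function.update a i (a i - 1)) : ℚ) := by
  classical
  set S := ∑ i ∈ s, a i with hS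
  have hS1 : 1 ≤ S := by
    obtain ⟨i, hi⟩ := hs
    have := Finset.single_le_sum (f := a) (fun j _ => Nat.zero_le _) hi
    have := ha i hi
    omega
  have hSQ : (S : ℚ) ≠ 0 := Nat.cast_ne_zero.mpr (by omega)
  have hterm : ∀ i ∈ s, (Nat.multinomial s (Function.update a i (a i - 1)) : ℚ)
      = (Nat.multinomial s a : ℚ) / S * a i := by
    intro i hi
    have hai := ha i hi
    have hsum : ∑ l ∈ s, Function.update a i (a i - 1) l = S - 1 := by
      rw [Finset.sum_update_of_mem hi, Finset.sdiff_singleton_eq_erase]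
      have h2 : S = a i + ∑ x ∈ s.erase i, a x := (Finset.add_sum_erase s a hi).symm
      omega
    have hfacS : (Nat.factorial S : ℚ) = S * Nat.factorial (S - 1) := by
      rw [← Nat.cast_mul, Nat.mul_factorial_pred (by omega)]
    have hfaci : (Nat.factorial (a i) : ℚ) = a i * Nat.factorial (a i - 1) := by
      rw [← Nat.cast_mul, Nat.mul_factorial_pred (by omega)]
    have hprod : ∏ l ∈ s, (Nat.factorial (Function.update a i (a i - 1) l) : ℚ)
        = Nat.factorial (a i - 1) *
          ∏ l ∈ s.erase i, (Nat.factorial (a l) : ℚ) := by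
      rw [← Finset.mul_prod_erase s _ hi, Function.update_self]
      congr 1
      refine Finset.prod_congr rfl fun l hl => ?_
      rw [Function.update_of_ne (Finset.ne_of_mem_erase hl)]
    have hprodA : ∏ l ∈ s, (Nat.factorial (a l) : ℚ)
        = Nat.factorial (a i) * ∏ l ∈ s.erase i, (Nat.factorial (a l) : ℚ) :=
      (Finset.mul_prod_erase s _ hi).symm
    rw [multinomial_eq_q, multinomial_eq_q, hsum, hprod, hprodA, hfacS, hfaci]
    have hne1 : (Nat.factorial (a i - 1) : ℚ) ≠ 0 := Nat.cast_ne_zero.mpr (Nat.factorial_ne_zero _)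
    have hne2 : (∏ l ∈ s.erase i, (Nat.factorial (a l) : ℚ)) ≠ 0 :=
      Finset.prod_ne_zero_iff.mpr fun l _ => Nat.cast_ne_zero.mpr (Nat.factorial_ne_zero _)
    have hai0 : (a i : ℚ) ≠ 0 := Nat.cast_ne_zero.mpr (by omega)
    field_simp
  rw [Finset.sum_congr rfl hterm, ← Finset.mul_sum, ← Nat.cast_sum, ← hS]
  field_simp


/-! ### recursion for the Dyson product -/

noncomputable def Bprod (s : Finset (Fin n)) (a : Fin n → ℕ) : AddMonoidAlgebra ℚ (Fin n → ℤ) :=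
  ∏ i ∈ s, ∏ j ∈ s.erase i, (1 - Xm (ev i - ev j)) ^ (a i - 1)

lemma dysonS_eq_B_mul {s : Finset (Fin n)} {a : Fin n → ℕ} (ha : ∀ i ∈ s, 1 ≤ a i) :
    dysonS s a = Bprod s a * ∏ i ∈ s, Pfac s i := by
  classical
  unfold dysonS Bprod Pfac
  rw [← Finset.prod_mul_distrib]
  refine Finset.prod_congr rfl fun i hi => ?_
  rw [← Finset.prod_mul_distrib]
  refine Finset.prod_congr rfl fun j hj => ?_
  rw [← pow_succ]
  congr 1
  have := ha i hi
  omega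

lemma dysonS_update_eq {s : Finset (Fin n)} {a : Fin n → ℕ} (ha : ∀ i ∈ s, 1 ≤ a i)
    {i : Fin n} (hi : i ∈ s) :
    dysonS s (Function.update a i (a i - 1)) = Bprod s a * ∏ l ∈ s.erase i, Pfac s l := by
  classical
  unfold dysonS Bprod Pfac
  have step : ∀ l ∈ s, ∏ j ∈ s.erase l, (1 - Xm (ev l - ev j)) ^ (Function.update a i (a i - 1) l)
      = (∏ j ∈ s.erase l, (1 - Xm (ev l - ev j)) ^ (a l - 1)) *
        (∏ j ∈ s.erase l, (1 - Xm (ev l - ev j))) ^ (if l = i then 0 else 1) := by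
    intro l hl
    calc ∏ j ∈ s.erase l, (1 - Xm (ev l - ev j)) ^ (Function.update a i (a i - 1) l)
        = ∏ j ∈ s.erase l, ((1 - Xm (ev l - ev j)) ^ (a l - 1) *
            (1 - Xm (ev l - ev j)) ^ (if l = i then 0 else 1)) := by
          refine Finset.prod_congr rfl fun j hj => ?_
          rw [← pow_add]
          congr 1
          by_cases hli : l = i
          · subst hli
            rw [Function.update_self]
            simp
          · rw [Function.update_of_ne hli]
            have := ha l hl
            simp only [if_neg hli]
            omega
      _ = (∏ j ∈ s.erase l, (1 - Xm (ev l - ev j)) ^ (a l - 1)) *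
            (∏ j ∈ s.erase l, (1 - Xm (ev l - ev j))) ^ (if l = i then 0 else 1) := by
          rw [Finset.prod_mul_distrib, Finset.prod_pow, Finset.prod_pow]
  rw [Finset.prod_congr rfl step, Finset.prod_mul_distrib]
  congr 1
  rw [← Finset.mul_prod_erase s _ hi]
  norm_num
  refine Finset.prod_congr rfl fun l hl => ?_
  rw [if_neg (Finset.ne_of_mem_erase hl)]

lemma dysonS_rec {s : Finset (Fin n)} {a : Fin n → ℕ} (hs : s.Nonempty)
    (ha : ∀ i ∈ s, 1 ≤ a i) :
    dysonS s a = ∑ i ∈ s, dysonS s (Function.update a i (a i - 1)) := by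
  rw [dysonS_eq_B_mul ha, lagrangeId hs, Finset.mul_sum]
  refine Finset.sum_congr rfl fun i hi => ?_
  rw [dysonS_update_eq ha hi]


/-! ### main induction -/

lemma ct_one : ct (1 : AddMonoidAlgebra ℚ (Fin n → ℤ)) = 1 := one_apply_zero

lemma ct_sum {ι : Type*} (s : Finset ι) (f : ι → AddMonoidAlgebra ℚ (Fin n → ℤ)) :
    ct (∑ i ∈ s, f i) = ∑ i ∈ s, ct (f i) := by
  simp only [ct]
  rw [AddMonoidAlgebra.coeff_sum]
  exact Finset.sum_apply' 0

lemma ctS (N : ℕ) : ∀ (s : Finset (Fin n)) (a : Fin n → ℕ),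
    s.card + ∑ i ∈ s, a i ≤ N → ct (dysonS s a) = Nat.multinomial s a := by
  induction N using Nat.strong_induction_on with
  | _ N ih =>
  intro s a hN
  classical
  rcases Finset.eq_empty_or_nonempty s with rfl | hs
  · rw [show dysonS ∅ a = 1 by simp [dysonS]]
    rw [ct_one]
    simp
  · by_cases hzero : ∃ k ∈ s, a k = 0
    · obtain ⟨k, hk, hak⟩ := hzero
      rw [ct_dysonS_zero hk hak, multinomial_erase hk hak]
      have hcard : (s.erase k).card = s.card - 1 := Finset.card_erase_of_mem hk
      have hcard1 : 1 ≤ s.card := Finset.card_pos.mpr hs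
      have hsum : ∑ i ∈ s, a i = a k + ∑ i ∈ s.erase k, a i := (Finset.add_sum_erase s a hk).symm
      exact ih (N - 1) (by omega) (s.erase k) a (by omega)
    · push_neg at hzero
      have ha : ∀ i ∈ s, 1 ≤ a i := fun i hi => Nat.one_le_iff_ne_zero.mpr (hzero i hi)
      rw [dysonS_rec hs ha, ct_sum]
      rw [multinomial_rec hs ha]
      refine Finset.sum_congr rfl fun i hi => ?_
      have hcard1 : 1 ≤ s.card := Finset.card_pos.mpr hs
      have hsum : ∑ l ∈ s, Function.update a i (a i - 1) l = (∑ l ∈ s, a l) - 1 := by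
        rw [Finset.sum_update_of_mem hi, Finset.sdiff_singleton_eq_erase]
        have h2 : ∑ l ∈ s, a l = a i + ∑ x ∈ s.erase i, a x := (Finset.add_sum_erase s a hi).symm
        have := ha i hi
        omega
      have hS1 : 1 ≤ ∑ l ∈ s, a l := by
        have := Finset.single_le_sum (f := a) (fun j _ => Nat.zero_le _) hi
        have := ha i hi
        omega
      exact ih (N - 1) (by omega) s (Function.update a i (a i - 1)) (by omega)

end DysonAux

theorem dyson_conjecture {n : ℕ} (hn : 1 ≤ n) (a : Fin n → ℕ) :
    ct (dyson a) = Nat.multinomial Finset.univ a := by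
  rw [DysonAux.dyson_eq]
  exact DysonAux.ctS (Finset.univ.card + ∑ i ∈ Finset.univ, a i) Finset.univ a le_rfl
end

section
/- The Dyson product satisfies the recurrence D_n(x, a) = ∑_{k=1}^n D_n(x, a - e_k), where e_k is the k-th unit vector, provided all a_i ≥ 1. -/
open Finset

noncomputable instance {n : ℕ} : IsDomain (AddMonoidAlgebra ℚ (Fin n → ℤ)) :=
  NoZeroDivisors.to_isDomain _

lemma Xm_mul {n : ℕ} (u v : Fin n → ℤ) : Xm u * Xm v = Xm (u + v) := by
  simp [Xm, AddMonoidAlgebra.single_mul_single]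

lemma Xm_ne_zero {n : ℕ} (v : Fin n → ℤ) : Xm v ≠ 0 :=
  fun h => one_ne_zero (AddMonoidAlgebra.single_eq_zero.mp h)

lemma Xm_inj {n : ℕ} {v w : Fin n → ℤ} (h : Xm v = Xm w) : v = w :=
  AddMonoidAlgebra.single_left_injective one_ne_zero h

lemma Xm_ne_one {n : ℕ} {v : Fin n → ℤ} (hv : v ≠ 0) : Xm v ≠ 1 := by
  intro h
  exact hv (Xm_inj (v := v) (w := 0) h)

lemma pi_single_inj {n : ℕ} {i j : Fin n} (h : (Pi.single i 1 : Fin n → ℤ) = Pi.single j 1) :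
    i = j := by
  by_contra hij
  have := congrFun h i
  rw [Pi.single_eq_same, Pi.single_eq_of_ne hij] at this
  exact one_ne_zero this

lemma single_sub_ne_zero {n : ℕ} {i j : Fin n} (hij : i ≠ j) :
    (Pi.single i 1 - Pi.single j 1 : Fin n → ℤ) ≠ 0 := by
  intro h
  exact hij (pi_single_inj (sub_eq_zero.mp h))

lemma dyson_split {n : ℕ} (b : Fin n → ℕ) (k : Fin n) :
    dyson b =
      (∏ j ∈ Finset.univ.filter (fun j => j ≠ k),
        (1 - Xm (Pi.single k 1 - Pi.single j 1)) ^ b k) *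
      ∏ i ∈ Finset.univ.erase k, ∏ j ∈ Finset.univ.filter (fun j => j ≠ i),
        (1 - Xm (Pi.single i 1 - Pi.single j 1)) ^ b i := by
  unfold dyson
  exact (Finset.mul_prod_erase Finset.univ _ (Finset.mem_univ k)).symm

lemma dyson_mul {n : ℕ} (a : Fin n → ℕ) (ha : ∀ i, 1 ≤ a i) (k : Fin n) :
    dyson (Function.update a k (a k - 1)) *
      ∏ j ∈ Finset.univ.filter (fun j => j ≠ k),
        (1 - Xm (Pi.single k 1 - Pi.single j 1)) =
    dyson a := by
  rw [dyson_split (Function.update a k (a k - 1)) k, dyson_split a k]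
  simp only [Function.update_self]
  have h1 : ∀ i ∈ Finset.univ.erase k,
      ∏ j ∈ Finset.univ.filter (fun j => j ≠ i),
        (1 - Xm (Pi.single i 1 - Pi.single j 1)) ^ (Function.update a k (a k - 1) i)
      = ∏ j ∈ Finset.univ.filter (fun j => j ≠ i),
        (1 - Xm (Pi.single i 1 - Pi.single j 1)) ^ a i := by
    intro i hi
    rw [Function.update_of_ne (Finset.mem_erase.mp hi).1]
  rw [Finset.prod_congr rfl h1, mul_right_comm, ← Finset.prod_mul_distrib]
  congr 1
  refine Finset.prod_congr rfl fun j _ => ?_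
  rw [← pow_succ, Nat.sub_add_cancel (ha k)]

theorem dyson_recurrence {n : ℕ} (hn : 1 ≤ n) (a : Fin n → ℕ) (ha : ∀ i, 1 ≤ a i) :
    dyson a = ∑ k : Fin n, dyson (Function.update a k (a k - 1)) := by
  classical
  haveI : Nonempty (Fin n) := ⟨⟨0, hn⟩⟩
  set K := FractionRing (AddMonoidAlgebra ℚ (Fin n → ℤ))
  set φ : AddMonoidAlgebra ℚ (Fin n → ℤ) →+* K :=
    (algebraMap (AddMonoidAlgebra ℚ (Fin n → ℤ)) K) with hφdef
  have hφ : Function.Injective φ := IsFractionRing.injective _ _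
  apply hφ
  rw [map_sum]
  set t : Fin n → K := fun i => φ (Xm (Pi.single i 1)) with ht
  have htne : ∀ i, t i ≠ 0 := by
    intro i h
    exact Xm_ne_zero _ (hφ (by simpa using h))
  have htinj : Function.Injective t := by
    intro i j h
    exact pi_single_inj (Xm_inj (hφ h))
  have hg : ∀ i j : Fin n, φ (1 - Xm (Pi.single i 1 - Pi.single j 1)) = 1 - t i / t j := by
    intro i j
    have hmul : Xm (Pi.single i 1 - Pi.single j 1) * Xm (Pi.single j 1)
        = Xm (Pi.single i 1 : Fin n → ℤ) := by
      rw [Xm_mul, sub_add_cancel]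
    have h2 : φ (Xm (Pi.single i 1 - Pi.single j 1)) * t j = t i := by
      rw [ht]; rw [← map_mul, hmul]
    have h3 : φ (Xm (Pi.single i 1 - Pi.single j 1)) = t i / t j :=
      (eq_div_iff (htne j)).mpr h2
    rw [map_sub, map_one, h3]
  have hgne : ∀ i j : Fin n, i ≠ j → (1 : K) - t i / t j ≠ 0 := by
    intro i j hij h
    rw [← hg] at h
    have h2 : (1 - Xm (Pi.single i 1 - Pi.single j 1) : AddMonoidAlgebra ℚ (Fin n → ℤ)) = 0 :=
      hφ (by simpa using h)
    exact sub_ne_zero.mpr (Ne.symm (Xm_ne_one (single_sub_ne_zero hij))) h2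
  have hprodne : ∀ k : Fin n,
      (∏ j ∈ Finset.univ.filter (fun j => j ≠ k), ((1 : K) - t k / t j)) ≠ 0 := by
    intro k
    refine Finset.prod_ne_zero_iff.mpr fun j hj => ?_
    exact hgne k j (Ne.symm (Finset.mem_filter.mp hj).2)
  have key : ∀ k : Fin n, φ (dyson (Function.update a k (a k - 1)))
      = φ (dyson a) * (∏ j ∈ Finset.univ.filter (fun j => j ≠ k), ((1 : K) - t k / t j))⁻¹ := by
    intro k
    have h1 := congrArg φ (dyson_mul a ha k)
    rw [map_mul, map_prod] at h1
    simp_rw [hg] at h1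
    exact (eq_mul_inv_iff_mul_eq₀ (hprodne k)).mpr h1
  simp_rw [key, ← Finset.mul_sum]
  have hfe : ∀ k : Fin n, Finset.univ.filter (fun j => j ≠ k) = Finset.univ.erase k := by
    intro k; ext j; simp [Finset.mem_erase, and_comm]
  have he : ∑ k : Fin n, Polynomial.eval (0 : K) (Lagrange.basis Finset.univ t k) = 1 := by
    have hb := Lagrange.sum_basis (Function.Injective.injOn htinj)
      (Finset.univ_nonempty (α := Fin n))
    have := congrArg (Polynomial.eval (0 : K)) hb
    rwa [Polynomial.eval_finset_sum, Polynomial.eval_one] at this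
  have lag : ∑ k : Fin n,
      (∏ j ∈ Finset.univ.filter (fun j => j ≠ k), ((1 : K) - t k / t j))⁻¹ = 1 := by
    refine Eq.trans (Finset.sum_congr rfl fun k _ => ?_) he
    rw [hfe k, Lagrange.basis, Polynomial.eval_prod, ← Finset.prod_inv_distrib]
    refine Finset.prod_congr rfl fun j hj => ?_
    have hjk : t j ≠ t k := fun h => (Finset.mem_erase.mp hj).1 (htinj h)
    have hsub : t k - t j ≠ 0 := sub_ne_zero.mpr (Ne.symm hjk)
    have hsub' : t j - t k ≠ 0 := sub_ne_zero.mpr hjk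
    simp only [Lagrange.basisDivisor, Polynomial.eval_mul, Polynomial.eval_C,
      Polynomial.eval_sub, Polynomial.eval_X]
    have hrw : (1 : K) - t k / t j = (t j - t k) / t j := one_sub_div (htne j)
    rw [hrw, inv_div, zero_sub, div_eq_mul_inv,
      show t j - t k = -(t k - t j) by ring, inv_neg]
    ring
  rw [lag, mul_one]
end

section
/- For 3 ≤ i ≤ n, define H_i(a) = a_1 a_i (1+a)/((1+a^{(1)})(2+a^{(1)})(1+a^{(1)}-a_i)) · C_n(a). Then H_i satisfies the recurrence H_i(a) = ∑_{k=1}^n H_i(a - e_k), provided all a_j ≥ 1. -/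
open Finset Nat

lemma mult_update {n : ℕ} (a : Fin n → ℕ) (k : Fin n) (hk : 1 ≤ a k) :
    (∑ j, a j) * Nat.multinomial Finset.univ (Function.update a k (a k - 1)) =
    a k * Nat.multinomial Finset.univ a := by
  set b := Function.update a k (a k - 1) with hb
  have hsd : (Finset.univ \ {k} : Finset (Fin n)) = Finset.univ.erase k := by
    ext x; simp [Finset.mem_erase, eq_comm, and_comm]
  have hprod : a k * ∏ j, (b j)! = ∏ j, (a j)! := by
    have h1 : (fun j => (b j)!) = Function.update (fun j => (a j)!) k ((a k - 1)!) := by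
      funext j
      exact Function.apply_update (fun _ x => x !) a k (a k - 1) j
    rw [show (∏ j, (b j)!) = ∏ j, (fun j => (b j)!) j from rfl, h1,
      Finset.prod_update_of_mem (Finset.mem_univ k), ← mul_assoc]
    have h2 : a k * (a k - 1)! = (a k)! := by
      rw [← Nat.succ_pred_eq_of_pos hk, Nat.factorial_succ]
      simp [Nat.succ_pred_eq_of_pos hk]
    rw [h2, hsd]
    exact Finset.mul_prod_erase Finset.univ (fun j => (a j)!) (Finset.mem_univ k)
  have hsum : ∑ j, b j = (∑ j, a j) - 1 := by
    rw [hb, Finset.sum_update_of_mem (Finset.mem_univ k), hsd]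
    have := Finset.add_sum_erase Finset.univ a (Finset.mem_univ k)
    omega
  have hS : 1 ≤ ∑ j, a j := le_trans hk (Finset.single_le_sum (fun j _ => Nat.zero_le _) (Finset.mem_univ k))
  have hpos : 0 < ∏ j, (a j)! := Finset.prod_pos (fun j _ => Nat.factorial_pos _)
  have key : (∑ j, a j) * Nat.multinomial Finset.univ b * ∏ j, (a j)! =
      a k * Nat.multinomial Finset.univ a * ∏ j, (a j)! := by
    calc (∑ j, a j) * Nat.multinomial Finset.univ b * ∏ j, (a j)!
        = (∑ j, a j) * (a k * ((∏ j, (b j)!) * Nat.multinomial Finset.univ b)) := by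
          rw [← hprod]; ring
      _ = (∑ j, a j) * (a k * (∑ j, b j)!) := by rw [Nat.multinomial_spec]
      _ = a k * ((∑ j, a j) * ((∑ j, a j) - 1)!) := by rw [hsum]; ring
      _ = a k * (∑ j, a j)! := by
          rw [show (∑ j, a j) * ((∑ j, a j) - 1)! = (∑ j, a j)! by
            rw [← Nat.succ_pred_eq_of_pos hS, Nat.factorial_succ]; simp]
      _ = a k * ((∏ j, (a j)!) * Nat.multinomial Finset.univ a) := by rw [Nat.multinomial_spec]
      _ = a k * Nat.multinomial Finset.univ a * ∏ j, (a j)! := by ring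
  exact Nat.eq_of_mul_eq_mul_right hpos key

theorem Hi_recurrence {n : ℕ} (hn : 3 ≤ n) (i : Fin n) (hi : 2 ≤ (i : ℕ))
    (H : (Fin n → ℕ) → ℚ)
    (hH : ∀ b : Fin n → ℕ,
      H b = (b ⟨0, by omega⟩ : ℚ) * (b i : ℚ) * (1 + ∑ j, (b j : ℚ)) /
          ((1 + ((∑ j, (b j : ℚ)) - b ⟨0, by omega⟩)) *
            (2 + ((∑ j, (b j : ℚ)) - b ⟨0, by omega⟩)) *
            (1 + ((∑ j, (b j : ℚ)) - b ⟨0, by omega⟩) - b i)) *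
        Nat.multinomial Finset.univ b)
    (a : Fin n → ℕ) (ha : ∀ j, 1 ≤ a j) :
    H a = ∑ k : Fin n, H (Function.update a k (a k - 1)) := by
  set z : Fin n := ⟨0, by omega⟩ with hzdef
  have hzi : z ≠ i := by
    intro h; apply_fun Fin.val at h; simp [hzdef] at h; omega
  set S : ℚ := ∑ j, (a j : ℚ) with hSdef
  set A : ℚ := (a z : ℚ) with hAdef
  set B : ℚ := (a i : ℚ) with hBdef
  set C : ℚ := (Nat.multinomial Finset.univ a : ℚ) with hCdef
  -- cast of update
  have hupd_cast : ∀ (k j : Fin n),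
      ((Function.update a k (a k - 1)) j : ℚ)
        = Function.update (fun j => (a j : ℚ)) k ((a k : ℚ) - 1) j := by
    intro k j
    rcases eq_or_ne j k with h | h
    · subst h
      simp [Nat.cast_sub (ha j)]
    · simp [Function.update_of_ne h]
  -- sum of update
  have hsum : ∀ k : Fin n, ∑ j, ((Function.update a k (a k - 1)) j : ℚ) = S - 1 := by
    intro k
    rw [Finset.sum_congr rfl fun j _ => hupd_cast k j,
      Finset.sum_update_of_mem (Finset.mem_univ k)]
    have h2 : (Finset.univ \ {k} : Finset (Fin n)) = Finset.univ.erase k := by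
      ext x; simp [Finset.mem_erase, eq_comm, and_comm]
    have h3 : (a k : ℚ) + ∑ x ∈ Finset.univ.erase k, (a x : ℚ) = S :=
      Finset.add_sum_erase Finset.univ (fun j => (a j : ℚ)) (Finset.mem_univ k)
    rw [h2]
    linarith [h3]
  have hone : ∀ j : Fin n, (1:ℚ) ≤ (a j : ℚ) := fun j => by exact_mod_cast ha j
  have hS0 : (3:ℚ) ≤ S := by
    calc (3:ℚ) ≤ (n:ℚ) := by exact_mod_cast hn
      _ = ∑ _j : Fin n, (1:ℚ) := by simp
      _ ≤ S := Finset.sum_le_sum fun j _ => hone j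
  have hSne : S ≠ 0 := by linarith
  -- multinomial of update
  have hmul : ∀ k : Fin n,
      (Nat.multinomial Finset.univ (Function.update a k (a k - 1)) : ℚ)
        = (a k : ℚ) * C / S := by
    intro k
    have h := mult_update a k (ha k)
    have hq : S * (Nat.multinomial Finset.univ (Function.update a k (a k - 1)) : ℚ)
        = (a k : ℚ) * C := by
      rw [hSdef, hCdef]; exact_mod_cast congrArg (Nat.cast : ℕ → ℚ) h
    field_simp
    linarith [hq]
  -- values of update at z and i
  have hvz : ∀ k : Fin n, k ≠ z →
      ((Function.update a k (a k - 1)) z : ℚ) = A := by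
    intro k hk
    rw [hupd_cast, Function.update_of_ne (Ne.symm hk)]
  have hvi : ∀ k : Fin n, k ≠ i →
      ((Function.update a k (a k - 1)) i : ℚ) = B := by
    intro k hk
    rw [hupd_cast, Function.update_of_ne (Ne.symm hk)]
  have hvzz : ((Function.update a z (a z - 1)) z : ℚ) = A - 1 := by
    rw [hupd_cast, Function.update_self]
  have hvii : ((Function.update a i (a i - 1)) i : ℚ) = B - 1 := by
    rw [hupd_cast, Function.update_self]
  -- positivity of denominators
  have hiz : i ∈ Finset.univ.erase z := Finset.mem_erase.mpr ⟨Ne.symm hzi, Finset.mem_univ i⟩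
  have hSA : S - A = ∑ j ∈ Finset.univ.erase z, (a j : ℚ) := by
    have h := Finset.add_sum_erase Finset.univ (fun j => (a j : ℚ)) (Finset.mem_univ z)
    linarith [h]
  have hSAB : S - A - B = ∑ j ∈ (Finset.univ.erase z).erase i, (a j : ℚ) := by
    have h := Finset.add_sum_erase (Finset.univ.erase z) (fun j => (a j : ℚ)) hiz
    rw [hSA]; linarith [h]
  have hSA2 : (2:ℚ) ≤ S - A := by
    have hc : (Finset.univ.erase z).card = n - 1 := by
      rw [Finset.card_erase_of_mem (Finset.mem_univ z), Finset.card_univ, Fintype.card_fin]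
    have h1 : ((n - 1 : ℕ) : ℚ) ≤ ∑ j ∈ Finset.univ.erase z, (a j : ℚ) := by
      calc ((n-1:ℕ):ℚ) = ∑ _j ∈ Finset.univ.erase z, (1:ℚ) := by
            rw [Finset.sum_const, hc]; simp
        _ ≤ _ := Finset.sum_le_sum fun j _ => hone j
    have h2 : (2:ℚ) ≤ ((n-1:ℕ):ℚ) := by exact_mod_cast (by omega : 2 ≤ n - 1)
    rw [hSA]; linarith
  have hSAB1 : (1:ℚ) ≤ S - A - B := by
    have hc : ((Finset.univ.erase z).erase i).card = n - 2 := by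
      rw [Finset.card_erase_of_mem hiz, Finset.card_erase_of_mem (Finset.mem_univ z),
        Finset.card_univ, Fintype.card_fin]
      omega
    have h1 : ((n - 2 : ℕ) : ℚ) ≤ ∑ j ∈ (Finset.univ.erase z).erase i, (a j : ℚ) := by
      calc ((n-2:ℕ):ℚ) = ∑ _j ∈ (Finset.univ.erase z).erase i, (1:ℚ) := by
            rw [Finset.sum_const, hc]; simp
        _ ≤ _ := Finset.sum_le_sum fun j _ => hone j
    have h2 : (1:ℚ) ≤ ((n-2:ℕ):ℚ) := by exact_mod_cast (by omega : 1 ≤ n - 2)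
    rw [hSAB]; linarith
  have d1 : (1 + (S - A)) ≠ 0 := by linarith
  have d2 : (2 + (S - A)) ≠ 0 := by linarith
  have d3 : (1 + (S - A) - B) ≠ 0 := by linarith
  have d4 : (S - A) ≠ 0 := by linarith
  have d5 : ((S - A) - B) ≠ 0 := by linarith
  -- compute each H of update
  have hHz : H (Function.update a z (a z - 1))
      = (A - 1) * B * S /
          ((1 + (S - A)) * (2 + (S - A)) * (1 + (S - A) - B)) * (A * C / S) := by
    rw [hH, hsum, hmul, hvzz, hvi z hzi]
    ring
  have hHi : H (Function.update a i (a i - 1))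
      = A * (B - 1) * S /
          ((S - A) * (1 + (S - A)) * (1 + (S - A) - B)) * (B * C / S) := by
    rw [hH, hsum, hmul, hvii, hvz i (Ne.symm hzi)]
    ring
  have hHk : ∀ k ∈ (Finset.univ.erase z).erase i,
      H (Function.update a k (a k - 1))
        = (a k : ℚ) * (A * B * S /
            ((S - A) * (1 + (S - A)) * ((S - A) - B)) * (C / S)) := by
    intro k hk
    rw [Finset.mem_erase, Finset.mem_erase] at hk
    rw [hH, hsum, hmul, hvz k hk.2.1, hvi k hk.1]
    ring
  -- split the sum
  have hsplit : ∑ k : Fin n, H (Function.update a k (a k - 1))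
      = H (Function.update a z (a z - 1)) + H (Function.update a i (a i - 1))
        + ∑ k ∈ (Finset.univ.erase z).erase i, H (Function.update a k (a k - 1)) := by
    rw [← Finset.add_sum_erase Finset.univ _ (Finset.mem_univ z),
      ← Finset.add_sum_erase (Finset.univ.erase z) _ hiz]
    ring
  rw [hsplit, hHz, hHi, Finset.sum_congr rfl hHk, ← Finset.sum_mul, ← hSAB]
  rw [hH a, ← hSdef, ← hAdef, ← hBdef, ← hCdef]
  field_simp
  ring
end

section
/- If a_r = 0 and r ≠ s, then the constant term of (x_s^2/x_r^2)·D_n(x,a) is 0. -/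
open Finset

lemma dyson_support_le {n : ℕ} (a : Fin n → ℕ) (r : Fin n) (har : a r = 0) :
    ∀ v ∈ (dyson a).coeff.support, v r ≤ 0 := by
  classical
  set P : AddMonoidAlgebra ℚ (Fin n → ℤ) → Prop := fun f => ∀ v ∈ f.coeff.support, v r ≤ 0 with hP
  have hone : P 1 := by
    intro v hv
    have : v ∈ (Finsupp.single (0 : Fin n → ℤ) (1 : ℚ)).support := hv
    have hv0 : v = 0 := by
      have := Finsupp.support_single_subset this
      simpa using this
    simp [hv0]
  have hmul : ∀ f g, P f → P g → P (f * g) := by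
    intro f g hf hg v hv
    have := AddMonoidAlgebra.support_coeff_mul_subset f g hv
    rw [Finset.mem_add] at this
    obtain ⟨x, hx, y, hy, rfl⟩ := this
    have := add_nonpos (hf x hx) (hg y hy)
    simpa using this
  have hpow : ∀ f (k : ℕ), P f → P (f ^ k) := by
    intro f k hf
    induction k with
    | zero => simpa using hone
    | succ m ih => rw [pow_succ]; exact hmul _ _ ih hf
  show P (dyson a)
  unfold dyson
  apply Finset.prod_induction _ P hmul hone
  intro i _
  apply Finset.prod_induction _ P hmul hone
  intro j hj
  rcases eq_or_ne i r with rfl | hir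
  · rw [har, pow_zero]; exact hone
  · apply hpow
    intro v hv
    have : v ∈ ((1 : AddMonoidAlgebra ℚ (Fin n → ℤ)) -
        Xm (Pi.single i 1 - Pi.single j 1)).coeff.support := hv
    have hsub : v ∈ ((1 : AddMonoidAlgebra ℚ (Fin n → ℤ)).coeff.support ∪
        (Xm (Pi.single i 1 - Pi.single j 1)).coeff.support) := Finsupp.support_sub this
    rw [Finset.mem_union] at hsub
    rcases hsub with h | h
    · have hv0 : v = 0 := by
        have := Finsupp.support_single_subset (h : v ∈ (Finsupp.single (0 : Fin n → ℤ) (1:ℚ)).support)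
        simpa using this
      simp [hv0]
    · have hv0 : v = Pi.single i 1 - Pi.single j 1 := by
        have := Finsupp.support_single_subset (h : _)
        simpa using this
      subst hv0
      simp only [Pi.sub_apply]
      rw [Pi.single_apply, Pi.single_apply]
      split_ifs with h1 h2 h2 <;> omega

theorem ct_zero_of_ar_eq_zero {n : ℕ} (a : Fin n → ℕ) (r s : Fin n) (hrs : r ≠ s)
    (har : a r = 0) :
    ct (Xm (2 • Pi.single s 1 - 2 • Pi.single r 1) * dyson a) = 0 := by
  classical
  have key := dyson_support_le a r har
  unfold ct Xm
  rw [AddMonoidAlgebra.coeff_single_mul_apply]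
  have hnot : -(2 • Pi.single s 1 - 2 • Pi.single r (1:ℤ)) + 0 ∉ (dyson a).coeff.support := by
    intro hmem
    have := key _ hmem
    simp only [add_zero, neg_sub, Pi.sub_apply, Pi.smul_apply, smul_eq_mul] at this
    rw [Pi.single_apply, Pi.single_apply] at this
    simp [hrs.symm] at this
    omega
  rw [Finsupp.notMem_support_iff] at hnot
  rw [hnot, mul_zero]
end

section
/- If a_r = 0 and r, s, t are distinct, then the constant term of (x_s x_t/x_r^2)·D_n(x,a) is 0. -/
open Finset

/-- the set of Laurent polynomials all of whose monomials have nonpositive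
exponent at `r` -/
private def NPr {n : ℕ} (r : Fin n) (f : AddMonoidAlgebra ℚ (Fin n → ℤ)) : Prop :=
  ∀ v ∈ f.coeff.support, v r ≤ 0

private lemma NPr_one {n : ℕ} (r : Fin n) : NPr r 1 := by
  intro v hv
  have := Finsupp.support_single_subset hv
  simp only [Finset.mem_singleton] at this
  simp [this]

private lemma NPr_mul {n : ℕ} (r : Fin n) {f g : AddMonoidAlgebra ℚ (Fin n → ℤ)}
    (hf : NPr r f) (hg : NPr r g) : NPr r (f * g) := by
  intro v hv
  have := AddMonoidAlgebra.support_coeff_mul_subset f g hv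
  rw [Finset.mem_add] at this
  obtain ⟨v1, hv1, v2, hv2, rfl⟩ := this
  have := add_nonpos (hf v1 hv1) (hg v2 hv2)
  simpa using this

private lemma NPr_pow {n : ℕ} (r : Fin n) {f : AddMonoidAlgebra ℚ (Fin n → ℤ)}
    (hf : NPr r f) (k : ℕ) : NPr r (f ^ k) := by
  induction k with
  | zero => simpa using NPr_one r
  | succ m ih => rw [pow_succ]; exact NPr_mul r ih hf

private lemma NPr_factor {n : ℕ} (r : Fin n) (w : Fin n → ℤ) (hw : w r ≤ 0) :
    NPr r (1 - Xm w) := by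
  intro v hv
  have h := Finsupp.support_sub (f := (1 : AddMonoidAlgebra ℚ (Fin n → ℤ)).coeff)
    (g := (Xm w).coeff) hv
  rw [Finset.mem_union] at h
  rcases h with h | h
  · have := Finsupp.support_single_subset h
    simp only [Finset.mem_singleton] at this
    simp [this]
  · have := Finsupp.support_single_subset h
    simp only [Finset.mem_singleton] at this
    simpa [this] using hw

private lemma NPr_dyson {n : ℕ} (a : Fin n → ℕ) (r : Fin n) (har : a r = 0) :
    NPr r (dyson a) := by
  unfold dyson
  refine Finset.prod_induction _ (NPr r) (fun _ _ => NPr_mul r) (NPr_one r) ?_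
  intro i _
  refine Finset.prod_induction _ (NPr r) (fun _ _ => NPr_mul r) (NPr_one r) ?_
  intro j hj
  by_cases hir : i = r
  · rw [hir, har, pow_zero]; exact NPr_one r
  · refine NPr_pow r (NPr_factor r _ ?_) (a i)
    simp only [Pi.sub_apply]
    rcases eq_or_ne j r with rfl | hjr
    · simp [Pi.single_eq_of_ne (Ne.symm hir)]
    · simp [Pi.single_eq_of_ne (Ne.symm hir), Pi.single_eq_of_ne (Ne.symm hjr)]

theorem ct_zero_of_ar_eq_zero' {n : ℕ} (a : Fin n → ℕ) (r s t : Fin n)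
    (hrs : r ≠ s) (hrt : r ≠ t) (hst : s ≠ t) (har : a r = 0) :
    ct (Xm (Pi.single s 1 + Pi.single t 1 - 2 • Pi.single r 1) * dyson a) = 0 := by
  set w : Fin n → ℤ := Pi.single s 1 + Pi.single t 1 - 2 • Pi.single r 1 with hw
  have key : ct (Xm w * dyson a) = (dyson a).coeff (-w + 0) := by
    rw [ct, Xm, AddMonoidAlgebra.coeff_single_mul_apply, one_mul]
  rw [key]
  by_contra h
  have hmem : (-w + 0) ∈ (dyson a).coeff.support := Finsupp.mem_support_iff.mpr h
  have := NPr_dyson a r har _ hmem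
  have hwr : w r = -2 := by
    simp [hw, Pi.sub_apply, Pi.add_apply, Pi.smul_apply,
      Pi.single_eq_of_ne hrs, Pi.single_eq_of_ne hrt]
  have : ((-w + 0 : Fin n → ℤ)) r = 2 := by simp [hwr]
  omega
end

section
/- If a_k = 0 and k ∉ {r,s}, then CT_x (x_s^2/x_r^2) D_n(x,a) = CT_{x^{⟨k⟩}} (x_s^2/x_r^2) D_{n-1}(x^{⟨k⟩}, a^{⟨k⟩}), i.e., the variable x_k and entry a_k can be deleted. -/
open Finset

namespace CTDel

variable {n : ℕ}

/-- Insert a `0` at position `k`, as an additive monoid hom. -/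
noncomputable def ins (k : Fin (n + 1)) : (Fin n → ℤ) →+ (Fin (n + 1) → ℤ) where
  toFun v := Fin.insertNth k 0 v
  map_zero' := by
    funext i
    rcases eq_or_ne i k with rfl | h
    · simp
    · obtain ⟨j, rfl⟩ := Fin.exists_succAbove_eq h
      simp
  map_add' v w := by
    funext i
    rcases eq_or_ne i k with rfl | h
    · simp
    · obtain ⟨j, rfl⟩ := Fin.exists_succAbove_eq h
      simp

lemma ins_apply_same (k : Fin (n + 1)) (v : Fin n → ℤ) : ins k v k = 0 := by
  simp [ins]

lemma ins_apply_succAbove (k : Fin (n + 1)) (v : Fin n → ℤ) (j : Fin n) :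
    ins k v (k.succAbove j) = v j := by
  simp [ins]

lemma ins_single (k : Fin (n + 1)) (j : Fin n) (c : ℤ) :
    ins k (Pi.single j c) = Pi.single (k.succAbove j) c := by
  funext i
  rcases eq_or_ne i k with rfl | h
  · rw [ins_apply_same, Pi.single_apply, if_neg (Fin.ne_succAbove i j)]
  · obtain ⟨m, rfl⟩ := Fin.exists_succAbove_eq h
    rw [ins_apply_succAbove]
    simp [Pi.single_apply, Fin.succAbove_right_inj]

lemma ins_injective (k : Fin (n + 1)) : Function.Injective (ins k) := by
  intro v w h
  funext j
  have := congrFun h (k.succAbove j)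
  rwa [ins_apply_succAbove, ins_apply_succAbove] at this

/-- The ring hom on Laurent polynomials induced by inserting the variable `x_k`. -/
noncomputable def Emap (k : Fin (n + 1)) :
    AddMonoidAlgebra ℚ (Fin n → ℤ) →+* AddMonoidAlgebra ℚ (Fin (n + 1) → ℤ) :=
  AddMonoidAlgebra.mapDomainRingHom ℚ (ins k)

lemma Emap_Xm (k : Fin (n + 1)) (v : Fin n → ℤ) : Emap k (Xm v) = Xm (ins k v) :=
  AddMonoidAlgebra.mapDomain_single

lemma Emap_apply_zero (k : Fin (n + 1)) (f : AddMonoidAlgebra ℚ (Fin n → ℤ)) :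
    (Emap k f).coeff 0 = f.coeff 0 := by
  have h0 : (0 : Fin (n + 1) → ℤ) = ins k 0 := (map_zero (ins k)).symm
  rw [h0]
  exact Finsupp.mapDomain_apply (ins_injective k) f.coeff 0

lemma Emap_support (k : Fin (n + 1)) (f : AddMonoidAlgebra ℚ (Fin n → ℤ))
    {v : Fin (n + 1) → ℤ} (hv : (Emap k f).coeff v ≠ 0) : v k = 0 := by
  classical
  have : v ∈ (Emap k f).coeff.support := Finsupp.mem_support_iff.2 hv
  have := Finsupp.mapDomain_support (f := ⇑(ins k)) (s := f.coeff) this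
  obtain ⟨u, _, rfl⟩ := Finset.mem_image.1 this
  exact ins_apply_same k u

/-- `Ng k f` : every monomial of `f` has strictly negative exponent of `x_k`. -/
def Ng (k : Fin (n + 1)) (f : AddMonoidAlgebra ℚ (Fin (n + 1) → ℤ)) : Prop :=
  ∀ v, f.coeff v ≠ 0 → v k < 0

lemma Ng.add {k : Fin (n + 1)} {f g : AddMonoidAlgebra ℚ (Fin (n + 1) → ℤ)}
    (hf : Ng k f) (hg : Ng k g) : Ng k (f + g) := by
  intro v hv
  have hadd : (f + g).coeff v = f.coeff v + g.coeff v := rfl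
  rcases (by by_contra h; push_neg at h; rw [hadd, h.1, h.2, add_zero] at hv; exact hv rfl :
      f.coeff v ≠ 0 ∨ g.coeff v ≠ 0) with h | h
  · exact hf v h
  · exact hg v h

lemma Ng.mul {k : Fin (n + 1)} {f g : AddMonoidAlgebra ℚ (Fin (n + 1) → ℤ)}
    (hf : Ng k f) (hg : Ng k g) : Ng k (f * g) := by
  classical
  intro v hv
  have hv' : v ∈ (f * g).coeff.support := Finsupp.mem_support_iff.2 hv
  have := AddMonoidAlgebra.support_coeff_mul_subset f g hv'
  obtain ⟨a, ha, b, hb, rfl⟩ := Finset.mem_add.1 this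
  have h1 := hf a (Finsupp.mem_support_iff.1 ha)
  have h2 := hg b (Finsupp.mem_support_iff.1 hb)
  have : (a + b) k = a k + b k := rfl
  omega

lemma Ng.mul_one_sub {k : Fin (n + 1)} {f g : AddMonoidAlgebra ℚ (Fin (n + 1) → ℤ)}
    (hf : Ng k (f - 1)) (hg : Ng k (g - 1)) : Ng k (f * g - 1) := by
  have : f * g - 1 = (f - 1) * (g - 1) + (f - 1) + (g - 1) := by ring
  rw [this]
  exact ((hf.mul hg).add hf).add hg

lemma Ng_zero (k : Fin (n + 1)) : Ng k (0 : AddMonoidAlgebra ℚ (Fin (n + 1) → ℤ)) := by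
  intro v hv; simp at hv

/-- If every monomial of `f` has zero `x_k`-exponent and every monomial of `g` has
negative `x_k`-exponent, then `f * g` has zero constant term. -/
lemma mul_apply_zero_eq_zero {k : Fin (n + 1)} {f g : AddMonoidAlgebra ℚ (Fin (n + 1) → ℤ)}
    (hf : ∀ v, f.coeff v ≠ 0 → v k = 0) (hg : Ng k g) : (f * g).coeff 0 = 0 := by
  classical
  by_contra h
  have h0 : (0 : Fin (n + 1) → ℤ) ∈ (f * g).coeff.support := Finsupp.mem_support_iff.2 h
  have := AddMonoidAlgebra.support_coeff_mul_subset f g h0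
  obtain ⟨a, ha, b, hb, hab⟩ := Finset.mem_add.1 this
  have h1 := hf a (Finsupp.mem_support_iff.1 ha)
  have h2 := hg b (Finsupp.mem_support_iff.1 hb)
  have : a k + b k = 0 := by
    have := congrFun hab k
    exact this
  omega

/-- Key lemma: multiplying by a series `F = 1 + (negative powers of x_k)` does not
change the constant term of something coming from the smaller algebra. -/
lemma ct_Emap_mul {k : Fin (n + 1)} (g : AddMonoidAlgebra ℚ (Fin n → ℤ))
    {F : AddMonoidAlgebra ℚ (Fin (n + 1) → ℤ)} (hF : Ng k (F - 1)) :
    ct (Emap k g * F) = ct g := by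
  have hsplit : Emap k g * F = Emap k g + Emap k g * (F - 1) := by ring
  have hz : (Emap k g * (F - 1)).coeff 0 = 0 :=
    mul_apply_zero_eq_zero (fun v hv => Emap_support k g hv) hF
  have hadd : (Emap k g + Emap k g * (F - 1)).coeff 0 = (Emap k g).coeff 0 + (Emap k g * (F - 1)).coeff 0 := rfl
  rw [ct, hsplit, hadd, hz, add_zero, Emap_apply_zero, ct]

lemma Ng_pow_sub_one {k : Fin (n + 1)} (w : Fin (n + 1) → ℤ) (hw : w k < 0) (m : ℕ) :
    Ng k ((1 - Xm w) ^ m - 1) := by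
  induction m with
  | zero => simpa using Ng_zero k
  | succ m ih =>
      rw [pow_succ]
      refine Ng.mul_one_sub ih ?_
      have : (1 : AddMonoidAlgebra ℚ (Fin (n + 1) → ℤ)) - Xm w - 1 = -Xm w := by ring
      rw [this]
      intro v hv
      have : ¬ (Xm w).coeff v = 0 := by
        intro h; rw [AddMonoidAlgebra.coeff_neg, Finsupp.neg_apply, h, neg_zero] at hv; exact hv rfl
      have hvw : v = w := by
        by_contra hne
        exact this (Finsupp.single_eq_of_ne hne)
      rwa [hvw]

end CTDel

open CTDel in
/-- If `a k = 0` and `k ∉ {r, s}`, the variable `x_k` and entry `a_k` can be deleted: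
here `r' s' : Fin n` are the indices corresponding to `r = k.succAbove r'`,
`s = k.succAbove s'` in the smaller index set. -/
theorem ct_delete_zero_entry {n : ℕ} (a : Fin (n + 1) → ℕ) (k : Fin (n + 1))
    (r' s' : Fin n) (hrs : r' ≠ s') (hak : a k = 0) :
    ct (Xm (2 • Pi.single (k.succAbove s') 1 - 2 • Pi.single (k.succAbove r') 1) * dyson a) =
      ct (Xm (2 • Pi.single s' 1 - 2 • Pi.single r' 1) * dyson (a ∘ k.succAbove)) := by
  classical
  set a' : Fin n → ℕ := a ∘ k.succAbove with ha'
  -- The extra factor coming from j = k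
  set F : AddMonoidAlgebra ℚ (Fin (n + 1) → ℤ) :=
    ∏ i' : Fin n, (1 - Xm (Pi.single (k.succAbove i') 1 - Pi.single k 1)) ^ a (k.succAbove i')
    with hF
  -- Step 1 : dyson a = F * Emap k (dyson a')
  have hdyson : dyson a = F * Emap k (dyson a') := by
    rw [dyson, Fin.prod_univ_succAbove _ k]
    have h1 : ∏ j ∈ Finset.univ.filter (fun j => j ≠ k),
        (1 - Xm (Pi.single k 1 - Pi.single j 1)) ^ a k = 1 := by
      simp [hak]
    rw [h1, one_mul]
    have h2 : ∀ i' : Fin n,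
        ∏ j ∈ Finset.univ.filter (fun j => j ≠ k.succAbove i'),
          (1 - Xm (Pi.single (k.succAbove i') 1 - Pi.single j 1)) ^ a (k.succAbove i')
        = (1 - Xm (Pi.single (k.succAbove i') 1 - Pi.single k 1)) ^ a (k.succAbove i') *
          ∏ j' ∈ Finset.univ.filter (fun j' => j' ≠ i'),
            (1 - Xm (Pi.single (k.succAbove i') 1 - Pi.single (k.succAbove j') 1))
              ^ a (k.succAbove i') := by
      intro i'
      rw [Finset.prod_filter]
      rw [Fin.prod_univ_succAbove _ k]
      rw [if_pos (Fin.ne_succAbove k i')]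
      congr 1
      rw [Finset.prod_filter]
      refine Finset.prod_congr rfl fun j' _ => ?_
      by_cases h : j' = i'
      · simp [h, Fin.succAbove_right_inj]
      · rw [if_pos (fun hc => h (Fin.succAbove_right_inj.mp hc)), if_pos h]
    calc ∏ i' : Fin n, ∏ j ∈ Finset.univ.filter (fun j => j ≠ k.succAbove i'),
          (1 - Xm (Pi.single (k.succAbove i') 1 - Pi.single j 1)) ^ a (k.succAbove i')
        = ∏ i' : Fin n,
            ((1 - Xm (Pi.single (k.succAbove i') 1 - Pi.single k 1)) ^ a (k.succAbove i') *
            ∏ j' ∈ Finset.univ.filter (fun j' => j' ≠ i'),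
              (1 - Xm (Pi.single (k.succAbove i') 1 - Pi.single (k.succAbove j') 1))
                ^ a (k.succAbove i')) := Finset.prod_congr rfl fun i' _ => h2 i'
      _ = F * Emap k (dyson a') := by
          rw [Finset.prod_mul_distrib]
          congr 1
          rw [dyson, map_prod]
          refine Finset.prod_congr rfl fun i' _ => ?_
          rw [map_prod]
          refine Finset.prod_congr rfl fun j' _ => ?_
          rw [map_pow, map_sub, map_one, Emap_Xm, map_sub, ins_single, ins_single]
          rfl
  -- Step 2 : the monomial
  have hmono : (2 • Pi.single (k.succAbove s') 1 - 2 • Pi.single (k.succAbove r') 1 :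
      Fin (n + 1) → ℤ) = ins k (2 • Pi.single s' 1 - 2 • Pi.single r' 1) := by
    rw [map_sub, map_nsmul, map_nsmul, ins_single, ins_single]
  -- Step 3 : F - 1 has only negative powers of x_k
  have hFneg : Ng k (F - 1) := by
    rw [hF]
    classical
    refine Finset.prod_induction _ (fun f => Ng k (f - 1))
      (fun f g hf hg => Ng.mul_one_sub hf hg) (by simpa using Ng_zero k) ?_
    intro i' _
    refine Ng_pow_sub_one _ ?_ _
    have h1 : (Pi.single (k.succAbove i') 1 - Pi.single k 1 : Fin (n + 1) → ℤ) k = -1 := by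
      simp [Pi.single_apply, Fin.ne_succAbove k i']
    omega
  -- Conclusion
  rw [hdyson, hmono, ← Emap_Xm]
  have : Emap k (Xm (2 • Pi.single s' 1 - 2 • Pi.single r' 1)) * (F * Emap k (dyson a')) =
      Emap k (Xm (2 • Pi.single s' 1 - 2 • Pi.single r' 1) * dyson a') * F := by
    rw [map_mul]; ring
  rw [this, ct_Emap_mul _ hFneg]
end

section
/- The constant term in x_k of (x_2^2/x_1^2) ∏_{i≠k, 1≤i≤n} (1 - x_i/x_k)^{a_i}, with k = 2 (and n ≥ 2), equals C(a_1,2) + a_1 ∑_{i=3}^n a_i x_i/x_1 + ∑_{i=3}^n C(a_i,2) x_i^2/x_1^2 + ∑_{3≤i<j≤n} a_i a_j x_i x_j / x_1^2, where C(m,2) = m(m-1)/2. -/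
open Finset

section PolyCoeffs

open Polynomial

variable {R : Type*} [CommRing R] [Algebra ℚ R]

lemma antid1' : (Finset.HasAntidiagonal.antidiagonal 1 : Finset (ℕ × ℕ)) = {(0,1),(1,0)} := by decide
lemma antid2' : (Finset.HasAntidiagonal.antidiagonal 2 : Finset (ℕ × ℕ)) = {(0,2),(1,1),(2,0)} := by decide

omit [Algebra ℚ R] in
lemma coeff_mul_one' (p q : R[X]) :
    (p * q).coeff 1 = p.coeff 0 * q.coeff 1 + p.coeff 1 * q.coeff 0 := by
  rw [Polynomial.coeff_mul, antid1']; simp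

omit [Algebra ℚ R] in
lemma coeff_mul_two' (p q : R[X]) :
    (p * q).coeff 2 = p.coeff 0 * q.coeff 2 + p.coeff 1 * q.coeff 1 + p.coeff 2 * q.coeff 0 := by
  rw [Polynomial.coeff_mul, antid2', Finset.sum_insert (by decide),
    Finset.sum_insert (by decide), Finset.sum_singleton]; norm_num; ring

lemma factor_coeffs (c : R) (m : ℕ) :
    ((1 - Polynomial.C c * Polynomial.X) ^ m).coeff 0 = 1 ∧
    ((1 - Polynomial.C c * Polynomial.X) ^ m).coeff 1 = -((m : ℚ) • c) ∧
    ((1 - Polynomial.C c * Polynomial.X) ^ m).coeff 2 =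
      ((m : ℚ) * ((m : ℚ) - 1) / 2) • (c * c) := by
  induction m with
  | zero => refine ⟨by simp, by simp [Polynomial.coeff_one], by simp [Polynomial.coeff_one]⟩
  | succ m ih =>
    obtain ⟨h0, h1, h2⟩ := ih
    rw [pow_succ]
    refine ⟨?_, ?_, ?_⟩
    · rw [Polynomial.mul_coeff_zero, h0]; simp
    · rw [coeff_mul_one', h0, h1]
      simp only [Polynomial.coeff_sub, Polynomial.coeff_one, Polynomial.coeff_C_mul,
        Polynomial.coeff_X_zero, Polynomial.coeff_X_one, Nat.cast_succ]
      norm_num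
      module
    · rw [coeff_mul_two', h0, h1, h2]
      simp only [Polynomial.coeff_sub, Polynomial.coeff_one, Polynomial.coeff_C_mul,
        Polynomial.coeff_X_zero, Polynomial.coeff_X_one, Polynomial.coeff_X, Nat.cast_succ]
      norm_num
      match_scalars
      ring

lemma prod_coeffs {ι : Type*} [LinearOrder ι] (s : Finset ι) (a : ι → ℕ) (c : ι → R) :
    (∏ i ∈ s, (1 - Polynomial.C (c i) * Polynomial.X) ^ a i).coeff 0 = 1 ∧
    (∏ i ∈ s, (1 - Polynomial.C (c i) * Polynomial.X) ^ a i).coeff 1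
      = -∑ i ∈ s, (a i : ℚ) • c i ∧
    (∏ i ∈ s, (1 - Polynomial.C (c i) * Polynomial.X) ^ a i).coeff 2
      = ∑ i ∈ s, ((a i : ℚ) * ((a i : ℚ) - 1) / 2) • (c i * c i)
        + ∑ i ∈ s, ∑ j ∈ s.filter (fun j => i < j), ((a i : ℚ) * (a j : ℚ)) • (c i * c j) := by
  classical
  induction s using Finset.induction_on_max with
  | empty => refine ⟨by simp, by simp [Polynomial.coeff_one], by simp [Polynomial.coeff_one]⟩
  | insert m s hlt ih =>
    obtain ⟨h0, h1, h2⟩ := ih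
    have hm : m ∉ s := fun h => lt_irrefl m (hlt m h)
    obtain ⟨f0, f1, f2⟩ := factor_coeffs (c m) (a m)
    rw [Finset.prod_insert hm]
    have key1 : ((1 - Polynomial.C (c m) * Polynomial.X) ^ a m *
        ∏ i ∈ s, (1 - Polynomial.C (c i) * Polynomial.X) ^ a i).coeff 1
        = -∑ i ∈ insert m s, (a i : ℚ) • c i := by
      rw [coeff_mul_one', f0, f1, h0, h1, Finset.sum_insert hm]
      ring
    refine ⟨by rw [Polynomial.mul_coeff_zero, f0, h0, one_mul], key1, ?_⟩
    rw [coeff_mul_two', f0, f1, f2, h0, h1, h2]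
    have hps : ∑ i ∈ insert m s, ∑ j ∈ (insert m s).filter (fun j => i < j),
        ((a i : ℚ) * (a j : ℚ)) • (c i * c j)
        = (∑ i ∈ s, ∑ j ∈ s.filter (fun j => i < j), ((a i : ℚ) * (a j : ℚ)) • (c i * c j))
          + ∑ i ∈ s, ((a i : ℚ) * (a m : ℚ)) • (c i * c m) := by
      rw [Finset.sum_insert hm]
      have e1 : (insert m s).filter (fun j => m < j) = ∅ := by
        rw [Finset.filter_insert, if_neg (lt_irrefl m)]
        exact Finset.filter_false_of_mem fun x hx => not_lt_of_gt (hlt x hx)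
      rw [e1, Finset.sum_empty, zero_add]
      rw [Finset.sum_congr rfl (fun i hi => by
        rw [Finset.filter_insert, if_pos (hlt i hi), Finset.sum_insert
          (fun h => hm (Finset.mem_of_mem_filter m h))]), Finset.sum_add_distrib]
      rw [add_comm]
    rw [hps, Finset.sum_insert hm]
    have hc : ((a m : ℚ) • c m) * (∑ i ∈ s, (a i : ℚ) • c i)
        = ∑ i ∈ s, ((a i : ℚ) * (a m : ℚ)) • (c i * c m) := by
      rw [Finset.mul_sum]
      refine Finset.sum_congr rfl fun i _ => ?_
      rw [smul_mul_smul_comm, mul_comm ((a m : ℚ)), mul_comm (c m)]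
    rw [one_mul, mul_one, neg_mul_neg, hc]
    abel

end PolyCoeffs

section Psi

lemma Xm_zero {n : ℕ} : Xm (0 : Fin n → ℤ) = 1 := rfl

/-- the monoid hom underlying `Psi` -/
noncomputable def psiHom {n : ℕ} (k : Fin n) :
    Multiplicative (Fin n → ℤ) →* LaurentPolynomial (AddMonoidAlgebra ℚ (Fin n → ℤ)) where
  toFun v := AddMonoidAlgebra.single (-(Multiplicative.toAdd v k)) (Xm (Multiplicative.toAdd v))
  map_one' := by
    simp only [toAdd_one, Pi.zero_apply, neg_zero, Xm_zero]
    rfl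
  map_mul' u v := by
    simp only [toAdd_mul, Pi.add_apply, AddMonoidAlgebra.single_mul_single, Xm_mul, neg_add]

/-- the algebra map extracting the `x_k`-grading into a Laurent-polynomial variable
(with the sign of the exponent reversed) -/
noncomputable def Psi {n : ℕ} (k : Fin n) :
    AddMonoidAlgebra ℚ (Fin n → ℤ) →ₐ[ℚ] LaurentPolynomial (AddMonoidAlgebra ℚ (Fin n → ℤ)) :=
  AddMonoidAlgebra.lift ℚ _ (Fin n → ℤ) (psiHom k)

lemma Psi_single {n : ℕ} (k : Fin n) (v : Fin n → ℤ) (r : ℚ) :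
    Psi k (AddMonoidAlgebra.single v r)
      = AddMonoidAlgebra.single (-(v k)) (AddMonoidAlgebra.single v r) := by
  rw [Psi, AddMonoidAlgebra.lift_single]
  simp only [psiHom, MonoidHom.coe_mk, OneHom.coe_mk, toAdd_ofAdd]
  rw [AddMonoidAlgebra.smul_single, Xm, AddMonoidAlgebra.smul_single]
  norm_num

lemma Psi_Xm {n : ℕ} (k : Fin n) (v : Fin n → ℤ) :
    Psi k (Xm v) = AddMonoidAlgebra.single (-(v k)) (Xm v) := Psi_single k v 1

lemma Psi_apply_coeff {n : ℕ} (k : Fin n) (f : AddMonoidAlgebra ℚ (Fin n → ℤ)) (m : ℤ) :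
    (Psi k f).coeff m
      = AddMonoidAlgebra.ofCoeff (Finsupp.filter (fun v : Fin n → ℤ => -(v k) = m) f.coeff) := by
  classical
  induction f using AddMonoidAlgebra.induction_linear with
  | zero => simp [Finsupp.filter_zero]
  | add f g hf hg =>
      rw [map_add, AddMonoidAlgebra.coeff_add, Finsupp.add_apply, AddMonoidAlgebra.coeff_add,
        Finsupp.filter_add, hf, hg]
      rfl
  | single v r =>
      rw [Psi_single]
      simp only [AddMonoidAlgebra.coeff_single]
      by_cases h : -(v k) = m
      · rw [Finsupp.filter_single_of_pos (p := fun v : Fin n → ℤ => -(v k) = m) h,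
          Finsupp.single_apply, if_pos h]
        rfl
      · rw [Finsupp.filter_single_of_neg (p := fun v : Fin n → ℤ => -(v k) = m) h,
          Finsupp.single_apply, if_neg h]
        rfl

lemma toLaurent_coeff {R : Type*} [CommSemiring R] (p : Polynomial R) (j : ℕ) :
    (Polynomial.toLaurent p).coeff ((j : ℤ)) = p.coeff j := by
  rw [LaurentPolynomial.coeff_toLaurent]
  exact Finsupp.mapDomain_apply Nat.cast_injective _ _

end Psi

/-- the constant term in `x₂` alone, i.e. the sum of all terms whose exponent of `x₂`
is zero, of `(x₂²/x₁²) ∏_{i ≠ 2} (1 - x_i/x₂)^{a_i}` -/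
theorem ct_x2_boundary {n : ℕ} (hn : 1 < n) (a : Fin n → ℕ) :
    AddMonoidAlgebra.ofCoeff (Finsupp.filter (fun v : Fin n → ℤ => v ⟨1, hn⟩ = 0)
      (Xm (2 • Pi.single (⟨1, hn⟩ : Fin n) 1 - 2 • Pi.single (⟨0, by omega⟩ : Fin n) 1) *
        ∏ i ∈ Finset.univ.filter (fun i => i ≠ (⟨1, hn⟩ : Fin n)),
          (1 - Xm (Pi.single i 1 - Pi.single (⟨1, hn⟩ : Fin n) 1)) ^ a i).coeff) =
    ((a ⟨0, by omega⟩ : ℚ) * ((a ⟨0, by omega⟩ : ℚ) - 1) / 2) •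
        (1 : AddMonoidAlgebra ℚ (Fin n → ℤ)) +
      (a ⟨0, by omega⟩ : ℚ) •
        ∑ i ∈ Finset.univ.filter (fun i : Fin n => 2 ≤ (i : ℕ)),
          (a i : ℚ) • Xm (Pi.single i 1 - Pi.single (⟨0, by omega⟩ : Fin n) 1) +
      (∑ i ∈ Finset.univ.filter (fun i : Fin n => 2 ≤ (i : ℕ)),
        ((a i : ℚ) * ((a i : ℚ) - 1) / 2) •
          Xm (2 • Pi.single i 1 - 2 • Pi.single (⟨0, by omega⟩ : Fin n) 1)) +
      ∑ i ∈ Finset.univ.filter (fun i : Fin n => 2 ≤ (i : ℕ)),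
        ∑ j ∈ Finset.univ.filter (fun j : Fin n => 2 ≤ (j : ℕ) ∧ i < j),
          ((a i : ℚ) * (a j : ℚ)) •
            Xm (Pi.single i 1 + Pi.single j 1 - 2 • Pi.single (⟨0, by omega⟩ : Fin n) 1) := by
  classical
  set k : Fin n := ⟨1, hn⟩ with hk
  set z : Fin n := ⟨0, by omega⟩ with hz0
  have hzk : z ≠ k := by simp [hk, hz0, Fin.ext_iff]
  set w : Fin n → ℤ := 2 • Pi.single k 1 - 2 • Pi.single z 1 with hwdef
  set y : Fin n → AddMonoidAlgebra ℚ (Fin n → ℤ) :=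
    fun i => Xm (Pi.single i 1 - Pi.single k 1) with hy
  -- rewrite the filter predicate and recognize the LHS as a Laurent coefficient
  have key : ∀ f : AddMonoidAlgebra ℚ (Fin n → ℤ),
      AddMonoidAlgebra.ofCoeff (Finsupp.filter (fun v : Fin n → ℤ => v k = 0) f.coeff)
          = (Psi k f).coeff 0 := by
    intro f
    rw [Psi_apply_coeff]
    ext v
    simp [Finsupp.filter_apply, neg_eq_zero, AddMonoidAlgebra.coeff_ofCoeff]
  rw [key, map_mul, map_prod]
  -- compute Psi on each piece
  have hw : Psi k (Xm w) = AddMonoidAlgebra.single (-2 : ℤ) (Xm w) := by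
    rw [Psi_Xm, show -(w k) = (-2 : ℤ) by simp [hwdef, Pi.single_apply, Ne.symm hzk]]
  have hfac : ∀ i ∈ Finset.univ.filter (fun i => i ≠ k),
      Psi k ((1 - Xm (Pi.single i 1 - Pi.single k 1)) ^ a i)
        = (1 - AddMonoidAlgebra.single (1 : ℤ) (y i)) ^ a i := by
    intro i hi
    have hik : i ≠ k := (Finset.mem_filter.mp hi).2
    rw [map_pow, map_sub, map_one, Psi_Xm,
      show -((Pi.single i 1 - Pi.single k 1 : Fin n → ℤ) k) = (1 : ℤ) by
        simp [Pi.single_apply, hik]]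
  rw [Finset.prod_congr rfl hfac, hw]
  -- the product is the image of a genuine polynomial
  set Q : Polynomial (AddMonoidAlgebra ℚ (Fin n → ℤ)) :=
    ∏ i ∈ Finset.univ.filter (fun i => i ≠ k),
      (1 - Polynomial.C (y i) * Polynomial.X) ^ a i with hQ
  have hQL : Polynomial.toLaurent Q
      = ∏ i ∈ Finset.univ.filter (fun i => i ≠ k),
          (1 - AddMonoidAlgebra.single (1 : ℤ) (y i)) ^ a i := by
    rw [hQ, map_prod]
    refine Finset.prod_congr rfl fun i _ => ?_
    rw [map_pow, map_sub, map_one, Polynomial.C_mul_X_eq_monomial,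
      Polynomial.toLaurent_C_mul_T, ← LaurentPolynomial.single_eq_C_mul_T]
    norm_num
  rw [← hQL, AddMonoidAlgebra.coeff_single_mul_apply]
  have h20 : -(-2 : ℤ) + 0 = ((2 : ℕ) : ℤ) := by norm_num
  rw [h20, toLaurent_coeff]
  obtain ⟨h0, h1, h2⟩ :=
    prod_coeffs (Finset.univ.filter (fun i => i ≠ k)) a y
  rw [← hQ] at h2
  rw [h2]
  -- index bookkeeping
  set S₂ := Finset.univ.filter (fun i : Fin n => 2 ≤ (i : ℕ)) with hS2
  have hz2 : z ∉ S₂ := by simp [hS2, hz0]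
  have hS : Finset.univ.filter (fun i => i ≠ k) = insert z S₂ := by
    ext j
    simp only [hS2, Finset.mem_filter, Finset.mem_univ, true_and, Finset.mem_insert, Ne,
      Fin.ext_iff, hk, hz0]
    omega
  -- multiplying monomials
  have hXmwyy : ∀ i j : Fin n, Xm w * (y i * y j)
      = Xm (w + ((Pi.single i 1 - Pi.single k 1) + (Pi.single j 1 - Pi.single k 1))) := by
    intro i j
    rw [hy]
    simp only
    rw [Xm_mul, Xm_mul]
  have ha : Xm w * (y z * y z) = 1 := by
    rw [hXmwyy, show w + ((Pi.single z 1 - Pi.single k 1) + (Pi.single z 1 - Pi.single k 1))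
      = (0 : Fin n → ℤ) by rw [hwdef]; abel, Xm_zero]
  have hb : ∀ j : Fin n, Xm w * (y z * y j) = Xm (Pi.single j 1 - Pi.single z 1) := by
    intro j
    rw [hXmwyy]
    congr 1
    rw [hwdef]
    abel
  have hc : ∀ i j : Fin n, Xm w * (y i * y j)
      = Xm (Pi.single i 1 + Pi.single j 1 - 2 • Pi.single z 1) := by
    intro i j
    rw [hXmwyy]
    congr 1
    rw [hwdef]
    abel
  have hd : ∀ i : Fin n, Xm w * (y i * y i)
      = Xm (2 • Pi.single i 1 - 2 • Pi.single z 1) := by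
    intro i
    rw [hXmwyy]
    congr 1
    rw [hwdef]
    abel
  rw [hS]
  have e_singles : Xm w * (∑ i ∈ insert z S₂, ((a i : ℚ) * ((a i : ℚ) - 1) / 2) • (y i * y i))
      = ((a z : ℚ) * ((a z : ℚ) - 1) / 2) • (1 : AddMonoidAlgebra ℚ (Fin n → ℤ))
        + ∑ i ∈ S₂, ((a i : ℚ) * ((a i : ℚ) - 1) / 2) •
            Xm (2 • Pi.single i 1 - 2 • Pi.single z 1) := by
    rw [Finset.sum_insert hz2, mul_add, Finset.mul_sum, mul_smul_comm, ha]
    congr 1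
    refine Finset.sum_congr rfl fun i _ => ?_
    rw [mul_smul_comm, hd i]
  have e_pairs : Xm w * (∑ i ∈ insert z S₂, ∑ j ∈ (insert z S₂).filter (fun j => i < j),
        ((a i : ℚ) * (a j : ℚ)) • (y i * y j))
      = (a z : ℚ) • (∑ j ∈ S₂, (a j : ℚ) • Xm (Pi.single j 1 - Pi.single z 1))
        + ∑ i ∈ S₂, ∑ j ∈ Finset.univ.filter (fun j : Fin n => 2 ≤ (j : ℕ) ∧ i < j),
            ((a i : ℚ) * (a j : ℚ)) •
              Xm (Pi.single i 1 + Pi.single j 1 - 2 • Pi.single z 1) := by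
    have f1 : (insert z S₂).filter (fun j => z < j) = S₂ := by
      ext j
      simp only [hS2, Finset.mem_filter, Finset.mem_insert, Finset.mem_univ, true_and,
        Fin.lt_def, Fin.ext_iff, hz0]
      omega
    rw [Finset.sum_insert hz2, f1, mul_add, Finset.mul_sum, Finset.mul_sum]
    congr 1
    · rw [Finset.smul_sum]
      refine Finset.sum_congr rfl fun j _ => ?_
      rw [mul_smul_comm, hb j, smul_smul]
    · refine Finset.sum_congr rfl fun i hi => ?_
      have hi2 : 2 ≤ (i : ℕ) := by
        have := Finset.mem_filter.mp (hS2 ▸ hi)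
        exact this.2
      have f2 : (insert z S₂).filter (fun j => i < j)
          = Finset.univ.filter (fun j : Fin n => 2 ≤ (j : ℕ) ∧ i < j) := by
        ext j
        simp only [hS2, Finset.mem_filter, Finset.mem_insert, Finset.mem_univ, true_and,
          Fin.lt_def, Fin.ext_iff, hz0]
        omega
      rw [f2, Finset.mul_sum]
      refine Finset.sum_congr rfl fun j _ => ?_
      rw [mul_smul_comm, hc i j]
  rw [mul_add, e_singles, e_pairs]
  abel
end
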